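/- For every x > 0, the digamma function satisfies ψ(x) < log x − 1/(2x). -/

import Mathlib

open Real Set Filter Topology Finset


open Real Set

lemma artanh_aux {t : ℝ} (ht0 : 0 < t) (ht1 : t < 1) :
    Real.log (1 + t) - Real.log (1 - t) < 2 * t / (1 - t ^ 2) := by
  set h : ℝ → ℝ := fun t => 2 * t / (1 - t ^ 2) + Real.log (1 - t) - Real.log (1 + t) with hh
  have key : StrictMonoOn h (Ico (0:ℝ) 1) := by
    have hcont : ContinuousOn h (Ico (0:ℝ) 1) := by
      apply ContinuousOn.sub
      apply ContinuousOn.add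
      · exact (continuousOn_const.mul continuousOn_id).div
          (continuousOn_const.sub (continuousOn_pow 2)) (fun x hx => by intro hc; nlinarith [hx.1, hx.2])
      · exact (continuousOn_const.sub continuousOn_id).log
          (fun x hx => by intro hc; simp only [Pi.sub_apply, Pi.add_apply, id_eq] at hc; nlinarith [hx.1, hx.2])
      · exact (continuousOn_const.add continuousOn_id).log
          (fun x hx => by intro hc; simp only [Pi.sub_apply, Pi.add_apply, id_eq] at hc; nlinarith [hx.1, hx.2])
    apply strictMonoOn_of_deriv_pos (convex_Ico 0 1) hcont
    intro t ht
    rw [interior_Ico] at ht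
    obtain ⟨h0, h1⟩ := ht
    have hne : (1:ℝ) - t ^ 2 ≠ 0 := by nlinarith
    have hd1 : HasDerivAt (fun t : ℝ => 1 - t ^ 2) (-(2 * t ^ 1)) t :=
      (hasDerivAt_pow 2 t).const_sub 1
    have hq : HasDerivAt (fun t : ℝ => 2 * t / (1 - t ^ 2))
        ((2 * (1 - t ^ 2) - 2 * t * -(2 * t ^ 1)) / (1 - t ^ 2) ^ 2) t := by
      simpa using ((hasDerivAt_id t).const_mul 2).fun_div hd1 hne
    have hl1 : HasDerivAt (fun t : ℝ => Real.log (1 - t)) ((-1) / (1 - t)) t := by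
      simpa using ((hasDerivAt_id t).const_sub 1).log (by intro hc; simp only [id_eq] at hc; nlinarith)
    have hl2 : HasDerivAt (fun t : ℝ => Real.log (1 + t)) (1 / (1 + t)) t := by
      simpa using ((hasDerivAt_id t).const_add 1).log (by intro hc; simp only [id_eq] at hc; nlinarith)
    have hD : HasDerivAt h
        ((2 * (1 - t ^ 2) - 2 * t * -(2 * t ^ 1)) / (1 - t ^ 2) ^ 2 + (-1) / (1 - t)
          - 1 / (1 + t)) t := (hq.add hl1).sub hl2
    rw [hD.deriv]
    have e1 : (1:ℝ) - t ≠ 0 := by nlinarith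
    have e2 : (1:ℝ) + t ≠ 0 := by nlinarith
    have : (2 * (1 - t ^ 2) - 2 * t * -(2 * t ^ 1)) / (1 - t ^ 2) ^ 2 + (-1) / (1 - t)
          - 1 / (1 + t) = 4 * t ^ 2 / (1 - t ^ 2) ^ 2 := by
      field_simp
      ring
    rw [this]
    positivity
  have h0 : h 0 = 0 := by simp [hh]
  have := key (left_mem_Ico.mpr one_pos) ⟨ht0.le, ht1⟩ ht0
  rw [h0] at this
  simp only [hh] at this
  linarith

lemma trap {a : ℝ} (ha : 0 < a) :
    Real.log (a + 1) - Real.log a < 1 / (2 * a) + 1 / (2 * (a + 1)) := by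
  have h1 : (0:ℝ) < 2 * a + 1 := by linarith
  set t : ℝ := 1 / (2 * a + 1) with htdef
  have ht0 : 0 < t := by positivity
  have ht1 : t < 1 := by rw [htdef, div_lt_one h1]; linarith
  have key := artanh_aux ht0 ht1
  have e1 : 1 + t = (2 * a + 2) / (2 * a + 1) := by rw [htdef]; field_simp; ring
  have e2 : 1 - t = (2 * a) / (2 * a + 1) := by rw [htdef]; field_simp; ring
  have elog : Real.log (1 + t) - Real.log (1 - t) = Real.log (a + 1) - Real.log a := by
    rw [e1, e2, Real.log_div (by positivity) (by positivity),
      Real.log_div (by positivity) (by positivity)]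
    have : (2:ℝ) * a + 2 = 2 * (a + 1) := by ring
    rw [this, Real.log_mul (by norm_num) (by positivity),
      Real.log_mul (by norm_num) (by positivity)]
    ring
  have erhs : 2 * t / (1 - t ^ 2) = 1 / (2 * a) + 1 / (2 * (a + 1)) := by
    have ha' : a ≠ 0 := ha.ne'
    have ha1 : a + 1 ≠ 0 := by positivity
    rw [htdef]
    rw [div_eq_iff (by intro hc; nlinarith [sq_nonneg (2*a+1)] : (1:ℝ) - (1/(2*a+1))^2 ≠ 0)]
    field_simp
    ring
  rw [elog, erhs] at key
  exact key



lemma log_sub_log_le {u v : ℝ} (hu : 0 < u) (hv : 0 < v) :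
    Real.log v - Real.log u ≤ (v - u) / u := by
  rw [← Real.log_div hv.ne' hu.ne']
  calc Real.log (v / u) ≤ v / u - 1 := Real.log_le_sub_one_of_pos (div_pos hv hu)
  _ = (v - u) / u := by field_simp

lemma le_log_sub_log {u v : ℝ} (hu : 0 < u) (hv : 0 < v) :
    (v - u) / v ≤ Real.log v - Real.log u := by
  have := log_sub_log_le hv hu
  have h2 : (u - v) / v = -((v - u) / v) := by ring
  linarith [this, h2 ▸ this]

theorem stmt2_aux (x : ℝ) (hx : 0 < x) :
    deriv Real.Gamma x / Real.Gamma x < Real.log x - 1 / (2 * x) := by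
  have hxm : ∀ m : ℕ, (0:ℝ) < x + m := fun m => by positivity
  have hxm1 : ∀ m : ℕ, (0:ℝ) < x + m + 1 := fun m => by positivity
  set a : ℕ → ℝ := fun m => 1 / (x + m) - (Real.log (x + m + 1) - Real.log (x + m)) with ha_def
  set c : ℕ → ℝ := fun m => 1 / (2 * (x + m)) - 1 / (2 * (x + m + 1)) with hc_def
  have ha_nonneg : ∀ m, 0 ≤ a m := by
    intro m
    have := log_sub_log_le (hxm m) (hxm1 m)
    simp only [ha_def]
    have : Real.log (x + m + 1) - Real.log (x + m) ≤ 1 / (x + m) := by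
      have h2 : (x + m + 1 - (x + m)) / (x + m) = 1 / (x + m) := by rw [add_sub_cancel_left]
      linarith [h2 ▸ this]
    linarith
  have ha_le : ∀ m, a m ≤ 1 / (x + m) - 1 / (x + m + 1) := by
    intro m
    have := le_log_sub_log (hxm m) (hxm1 m)
    have h2 : (x + m + 1 - (x + m)) / (x + m + 1) = 1 / (x + m + 1) := by
      rw [add_sub_cancel_left]
    rw [h2] at this
    simp only [ha_def]
    linarith
  have hc_lt_a : ∀ m, c m < a m := by
    intro m
    have h1 := trap (hxm m)
    have e : 2 * (1 / (2 * (x + (m:ℝ)))) = 1 / (x + m) := by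
      rw [one_div, mul_inv, ← mul_assoc, mul_inv_cancel₀ (two_ne_zero), one_mul, one_div]
    simp only [ha_def, hc_def]
    linarith
  have hc_nonneg : ∀ m, 0 ≤ c m := by
    intro m
    simp only [hc_def]
    have h1 : 1 / (2 * (x + m + 1)) ≤ 1 / (2 * (x + m)) := by
      apply one_div_le_one_div_of_le (by positivity)
      linarith
    linarith
  -- telescoping partial sums
  have htel : ∀ n : ℕ, ∑ i ∈ range n, (1 / (x + i) - 1 / (x + i + 1)) = 1 / x - 1 / (x + n) := by
    intro n
    have := Finset.sum_range_sub' (f := fun i : ℕ => 1 / (x + i)) n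
    simp only [Nat.cast_zero, add_zero, Nat.cast_add, Nat.cast_one] at this
    rw [← this]
    apply Finset.sum_congr rfl
    intro i _
    push_cast
    ring_nf
  have htelc : ∀ n : ℕ, ∑ i ∈ range n, c i = 1 / (2 * x) - 1 / (2 * (x + n)) := by
    intro n
    have := Finset.sum_range_sub' (f := fun i : ℕ => 1 / (2 * (x + i))) n
    simp only [Nat.cast_zero, add_zero, Nat.cast_add, Nat.cast_one] at this
    rw [← this]
    apply Finset.sum_congr rfl
    intro i _
    simp only [hc_def]
    push_cast
    ring_nf
  have htellog : ∀ n : ℕ, ∑ i ∈ range n, (Real.log (x + i + 1) - Real.log (x + i))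
      = Real.log (x + n) - Real.log x := by
    intro n
    have := Finset.sum_range_sub (f := fun i : ℕ => Real.log (x + i)) n
    simp only [Nat.cast_zero, add_zero, Nat.cast_add, Nat.cast_one] at this
    rw [← this]
    apply Finset.sum_congr rfl
    intro i _
    push_cast
    ring_nf
  have ha_sum : Summable a := by
    apply summable_of_sum_range_le ha_nonneg (c := 1 / x)
    intro n
    calc ∑ i ∈ range n, a i ≤ ∑ i ∈ range n, (1 / (x + i) - 1 / (x + i + 1)) :=
          Finset.sum_le_sum fun i _ => ha_le i
    _ = 1 / x - 1 / (x + n) := htel n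
    _ ≤ 1 / x := by
        have : (0:ℝ) ≤ 1 / (x + n) := by positivity
        linarith
  have hc_sum : Summable c := by
    apply summable_of_sum_range_le hc_nonneg (c := 1 / (2 * x))
    intro n
    rw [htelc n]
    have : (0:ℝ) ≤ 1 / (2 * (x + n)) := by positivity
    linarith
  -- limits
  have hxn_top : Tendsto (fun n : ℕ => x + n) atTop atTop :=
    tendsto_atTop_add_const_left _ x tendsto_natCast_atTop_atTop
  have hinv0 : Tendsto (fun n : ℕ => 1 / (x + n)) atTop (𝓝 0) := by
    exact hxn_top.inv_tendsto_atTop.congr fun n => (one_div _).symm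
  have hinv0' : Tendsto (fun n : ℕ => 1 / (2 * (x + n))) atTop (𝓝 0) := by
    have h2 : Tendsto (fun n : ℕ => 2 * (x + n)) atTop atTop :=
      hxn_top.const_mul_atTop two_pos
    exact h2.inv_tendsto_atTop.congr fun n => (one_div _).symm
  have hc_tsum : ∑' m, c m = 1 / (2 * x) := by
    have h1 : Tendsto (fun n => ∑ i ∈ range n, c i) atTop (𝓝 (∑' m, c m)) :=
      hc_sum.hasSum.tendsto_sum_nat
    have h2 : Tendsto (fun n => ∑ i ∈ range n, c i) atTop (𝓝 (1 / (2 * x))) := by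
      simp only [htelc]
      simpa using tendsto_const_nhds.sub hinv0'
    exact tendsto_nhds_unique h1 h2
  have hT : 1 / (2 * x) < ∑' m, a m := by
    rw [← hc_tsum]
    exact Summable.tsum_lt_tsum_of_nonneg hc_nonneg (fun m => (hc_lt_a m).le) (hc_lt_a 0) ha_sum
  set T : ℝ := ∑' m, a m with hT_def
  set L : ℝ := Real.log x - T with hL_def
  -- the limit formula for the digamma-type sequence
  have hseq_eq : ∀ n : ℕ, Real.log n - ∑ m ∈ range (n + 1), 1 / (x + m)
      = (Real.log n - Real.log (x + n)) + Real.log x - ∑ m ∈ range n, a m - 1 / (x + n) := by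
    intro n
    have hsplit : ∑ m ∈ range (n + 1), 1 / (x + (m:ℝ)) = ∑ m ∈ range n, 1 / (x + (m:ℝ)) + 1 / (x + n) :=
      Finset.sum_range_succ _ n
    have hsuma : ∑ m ∈ range n, a m
        = ∑ m ∈ range n, 1 / (x + (m:ℝ)) - (Real.log (x + n) - Real.log x) := by
      rw [← htellog n, ← Finset.sum_sub_distrib]
    rw [hsplit, hsuma]
    ring
  have hL_lim : Tendsto (fun n : ℕ => Real.log n - ∑ m ∈ range (n + 1), 1 / (x + m))
      atTop (𝓝 L) := by
    have t1 : Tendsto (fun n : ℕ => Real.log n - Real.log (x + n)) atTop (𝓝 0) := by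
      have heq : ∀ᶠ n : ℕ in atTop, -Real.log (1 + x / n) = Real.log n - Real.log (x + n) := by
        filter_upwards [eventually_ge_atTop 1] with n hn
        have hn0 : (0:ℝ) < n := by exact_mod_cast hn
        rw [show Real.log (n:ℝ) - Real.log (x + n) = -(Real.log (x + n) - Real.log (n:ℝ)) by
            ring,
          ← Real.log_div (by positivity) hn0.ne',
          show (x + (n:ℝ)) / n = 1 + x / n by rw [add_div, div_self hn0.ne', add_comm]]
      have t0 : Tendsto (fun n : ℕ => 1 + x / n) atTop (𝓝 1) := by
        simpa using tendsto_const_nhds.add (tendsto_const_div_atTop_nhds_zero_nat x)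
      have tlog : Tendsto (fun n : ℕ => Real.log (1 + x / n)) atTop (𝓝 0) := by
        have := (Real.continuousAt_log one_ne_zero).tendsto.comp t0
        simpa [Function.comp_def] using this
      exact Tendsto.congr' heq (by simpa using tlog.neg)
    have t2 : Tendsto (fun n : ℕ => ∑ m ∈ range n, a m) atTop (𝓝 T) :=
      ha_sum.hasSum.tendsto_sum_nat
    have := ((t1.add (tendsto_const_nhds : Tendsto (fun _ : ℕ => Real.log x) atTop (𝓝 (Real.log x)))).sub t2).sub hinv0
    have h0 : (0:ℝ) + Real.log x - T - 0 = L := by rw [hL_def]; ring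
    rw [h0] at this
    exact this.congr fun n => (hseq_eq n).symm
  -- slope bound from convexity of each logGammaSeq
  have hslope : ∀ y : ℝ, 0 < y → y < x →
      Real.log (Real.Gamma x) - Real.log (Real.Gamma y) ≤ (x - y) * L := by
    intro y hy hyx
    have hgx := Real.BohrMollerup.tendsto_log_gamma hx
    have hgy := Real.BohrMollerup.tendsto_log_gamma hy
    refine le_of_tendsto_of_tendsto' (hgx.sub hgy) (hL_lim.const_mul (x - y)) fun n => ?_
    have key : ∀ m ∈ range (n + 1),
        (x - y) * (1 / (x + m)) ≤ Real.log (x + m) - Real.log (y + m) := by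
      intro m _
      have hym : (0:ℝ) < y + m := by positivity
      have := le_log_sub_log hym (hxm m)
      have h2 : (x + m - (y + m)) / (x + m) = (x - y) * (1 / (x + m)) := by
        field_simp; ring
      linarith [h2 ▸ this]
    have hsum_le : ∑ m ∈ range (n + 1), (x - y) * (1 / (x + (m:ℝ)))
        ≤ ∑ m ∈ range (n + 1), (Real.log (x + m) - Real.log (y + m)) :=
      Finset.sum_le_sum key
    have hexp : Real.BohrMollerup.logGammaSeq x n - Real.BohrMollerup.logGammaSeq y n
        = (x - y) * Real.log n
          - ∑ m ∈ range (n + 1), (Real.log (x + m) - Real.log (y + m)) := by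
      simp only [Real.BohrMollerup.logGammaSeq]
      rw [Finset.sum_sub_distrib]
      ring
    have hrhs : (x - y) * (Real.log n - ∑ m ∈ range (n + 1), 1 / (x + (m:ℝ)))
        = (x - y) * Real.log n - ∑ m ∈ range (n + 1), (x - y) * (1 / (x + (m:ℝ))) := by
      rw [mul_sub, Finset.mul_sum]
    rw [hexp, hrhs]
    linarith
  -- ψ(x) = deriv of log ∘ Γ, bounded by L via slopes from the left
  have hΓd : DifferentiableAt ℝ Real.Gamma x := by
    apply Real.differentiableAt_Gamma
    intro m
    have : (0:ℝ) ≤ m := Nat.cast_nonneg m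
    intro hc
    rw [hc] at hx
    linarith
  have hF : HasDerivAt (fun y => Real.log (Real.Gamma y)) (deriv Real.Gamma x / Real.Gamma x) x :=
    hΓd.hasDerivAt.log (Real.Gamma_pos_of_pos hx).ne'
  have hpsi_le : deriv Real.Gamma x / Real.Gamma x ≤ L := by
    have hslopeT := hasDerivAt_iff_tendsto_slope.mp hF
    have hmono : 𝓝[<] x ≤ 𝓝[≠] x :=
      nhdsWithin_mono x fun y (hy : y < x) => ne_of_lt hy
    have hslopeT' : Tendsto (slope (fun y => Real.log (Real.Gamma y)) x) (𝓝[<] x)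
        (𝓝 (deriv Real.Gamma x / Real.Gamma x)) := hslopeT.mono_left hmono
    refine le_of_tendsto hslopeT' ?_
    filter_upwards [Ioo_mem_nhdsLT_of_mem (⟨hx, le_refl x⟩ : x ∈ Ioc 0 x)] with y hy
    have hyx : y < x := hy.2
    have hkey := hslope y hy.1 hyx
    rw [slope_def_field]
    rw [div_le_iff_of_neg (by linarith : y - x < 0)]
    have : L * (y - x) = -((x - y) * L) := by ring
    nlinarith [hkey]
  calc deriv Real.Gamma x / Real.Gamma x ≤ L := hpsi_le
  _ = Real.log x - T := hL_def
  _ < Real.log x - 1 / (2 * x) := by linarith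


/-- The digamma inequality `ψ(x) < log x − 1/(2x)` for `x > 0`, where
`ψ = Γ'/Γ` is the logarithmic derivative of the Gamma function. -/
theorem stmt2 (x : ℝ) (hx : 0 < x) :
    deriv Real.Gamma x / Real.Gamma x < Real.log x - 1 / (2 * x) := by
  exact stmt2_aux x hx
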